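/- Let {x_i}_{i=1}^m be a frame for ℝⁿ. Suppose there exist a subset I ⊂ {1,...,m} of size n−1 and an orthogonal projection P on ℝⁿ of rank n−1 such that {P x_i}_{i∈I} is an orthogonal set of nonzero vectors and (I−P) x_j ≠ 0 for some j ∉ I. Then {x_i}_{i=1}^m is piecewise scalable: there exist real constants a_1,...,a_m, b_1,...,b_m such that {a_i P x_i + b_i (I−P) x_i}_{i=1}^m is a Parseval frame for ℝⁿ. -/

import Mathlib

open scoped RealInnerProductSpace
open Finset

noncomputable section

/-- A finite family of vectors in `ℝⁿ` is a Parseval frame if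
`∑ i, ⟪x, v i⟫² = ‖x‖²` for all `x`. -/
def IsParseval {n : ℕ} {ι : Type} [Fintype ι] (v : ι → EuclideanSpace ℝ (Fin n)) : Prop :=
  ∀ x : EuclideanSpace ℝ (Fin n), ∑ i, ⟪x, v i⟫ ^ 2 = ‖x‖ ^ 2

/-- `P` is an orthogonal projection: idempotent and self-adjoint. -/
def IsOrthProj {n : ℕ} (P : EuclideanSpace ℝ (Fin n) →ₗ[ℝ] EuclideanSpace ℝ (Fin n)) : Prop :=
  P ∘ₗ P = P ∧ ∀ x y : EuclideanSpace ℝ (Fin n), ⟪P x, y⟫ = ⟪x, P y⟫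

theorem stmt4 {m n : ℕ} (x : Fin m → EuclideanSpace ℝ (Fin n))
    (hframe : Submodule.span ℝ (Set.range x) = ⊤)
    (P : EuclideanSpace ℝ (Fin n) →ₗ[ℝ] EuclideanSpace ℝ (Fin n))
    (hP : IsOrthProj P)
    (hrank : Module.finrank ℝ (LinearMap.range P) = n - 1)
    (I : Finset (Fin m)) (hcard : I.card = n - 1)
    (hne : ∀ i ∈ I, P (x i) ≠ 0)
    (horth : ∀ i ∈ I, ∀ j ∈ I, i ≠ j → ⟪P (x i), P (x j)⟫ = 0)
    (hj : ∃ j ∉ I, x j - P (x j) ≠ 0) :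
    ∃ a b : Fin m → ℝ,
      IsParseval (fun i => a i • P (x i) + b i • (x i - P (x i))) := by
  obtain ⟨j, hjI, hjne⟩ := hj
  have hPP : ∀ y, P (P y) = P y := fun y => by
    have := congrArg (fun f => f y) hP.1; simpa using this
  have hsa := hP.2
  -- n ≥ 1
  have hn : n ≠ 0 := by
    rintro rfl
    exact hjne (Subsingleton.elim _ _)
  -- the coefficients
  set a : Fin m → ℝ := fun i => if i ∈ I then ‖P (x i)‖⁻¹ else 0 with ha
  set b : Fin m → ℝ := fun i => if i = j then ‖x j - P (x j)‖⁻¹ else 0 with hb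
  set v : Fin m → EuclideanSpace ℝ (Fin n) :=
    fun i => a i • P (x i) + b i • (x i - P (x i)) with hv
  refine ⟨a, b, ?_⟩
  have hvI : ∀ i ∈ I, v i = ‖P (x i)‖⁻¹ • P (x i) := by
    intro i hi
    have hij : i ≠ j := fun h => hjI (h ▸ hi)
    simp [hv, ha, hb, hi, hij]
  have hvj : v j = ‖x j - P (x j)‖⁻¹ • (x j - P (x j)) := by
    simp [hv, ha, hb, hjI]
  have hvout : ∀ i, i ∉ insert j I → v i = 0 := by
    intro i hi
    simp only [Finset.mem_insert, not_or] at hi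
    simp [hv, ha, hb, hi.1, hi.2]
  -- key orthogonality : range P ⟂ (y - P y)
  have hperp : ∀ u y, ⟪P u, y - P y⟫ = 0 := by
    intro u y
    rw [hsa]
    simp [inner_sub_right, hPP]
  set S : Finset (Fin m) := insert j I with hS
  have hcardS : S.card = n := by
    rw [hS, Finset.card_insert_of_notMem hjI, hcard]
    omega
  -- orthonormality of v on S
  have hon : Orthonormal ℝ (fun i : S => v (i : Fin m)) := by
    rw [orthonormal_iff_ite]
    rintro ⟨i, hi⟩ ⟨k, hk⟩
    have hi' : i = j ∨ i ∈ I := Finset.mem_insert.mp (hS ▸ hi)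
    have hk' : k = j ∨ k ∈ I := Finset.mem_insert.mp (hS ▸ hk)
    by_cases hik : i = k
    · subst hik
      simp only [Subtype.mk.injEq, if_pos rfl]
      rcases hi' with rfl | hi'
      · rw [hvj, real_inner_smul_left, real_inner_smul_right,
          real_inner_self_eq_norm_sq]
        have h1 : ‖x i - P (x i)‖ ≠ 0 := norm_ne_zero_iff.mpr hjne
        field_simp
        simp
      · rw [hvI i hi', real_inner_smul_left, real_inner_smul_right,
          real_inner_self_eq_norm_sq]
        have h1 : ‖P (x i)‖ ≠ 0 := norm_ne_zero_iff.mpr (hne i hi')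
        field_simp
        simp
    · have hne' : (⟨i, hi⟩ : S) ≠ ⟨k, hk⟩ := by simpa using hik
      rw [if_neg hne']
      rcases hi' with rfl | hi'
      · rcases hk' with rfl | hk'
        · exact absurd rfl hik
        · rw [hvj, hvI k hk', real_inner_smul_left, real_inner_smul_right,
            real_inner_comm]
          rw [hperp]
          ring
      · rcases hk' with rfl | hk'
        · rw [hvj, hvI i hi', real_inner_smul_left, real_inner_smul_right, hperp]
          ring
        · rw [hvI i hi', hvI k hk', real_inner_smul_left, real_inner_smul_right,
            horth i hi' k hk' hik]
          ring
  -- it spans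
  have hfc : Fintype.card S = Module.finrank ℝ (EuclideanSpace ℝ (Fin n)) := by
    rw [Fintype.card_coe, hcardS, finrank_euclideanSpace_fin]
  have hsp : Submodule.span ℝ (Set.range (fun i : S => v (i : Fin m))) = ⊤ := by
    have : Nonempty S := by
      refine ⟨⟨j, ?_⟩⟩; rw [hS]; exact Finset.mem_insert_self _ _
    exact hon.linearIndependent.span_eq_top_of_card_eq_finrank hfc
  -- the orthonormal basis
  let B : OrthonormalBasis S ℝ (EuclideanSpace ℝ (Fin n)) :=
    OrthonormalBasis.mk hon (by rw [hsp])
  intro y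
  have hB : ∀ i : S, B i = v (i : Fin m) := fun i => by
    simp only [B, OrthonormalBasis.coe_mk]
  have key := B.sum_inner_mul_inner y y
  have : ∑ i : S, ⟪y, v (i : Fin m)⟫ ^ 2 = ‖y‖ ^ 2 := by
    rw [← real_inner_self_eq_norm_sq, ← key]
    refine Finset.sum_congr rfl fun i _ => ?_
    rw [hB, sq, real_inner_comm (v (i : Fin m)) y]
  calc ∑ i, ⟪y, v i⟫ ^ 2 = ∑ i ∈ S, ⟪y, v i⟫ ^ 2 := by
        refine (Finset.sum_subset (Finset.subset_univ S) ?_).symm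
        intro i _ hi
        rw [hvout i hi]
        simp
    _ = ∑ i : S, ⟪y, v (i : Fin m)⟫ ^ 2 := (Finset.sum_attach _ _).symm
    _ = ‖y‖ ^ 2 := this
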